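/- Let n_max ∈ ℕ and suppose N ≥ 2·n_max + 1 and M ≥ n_max + 1. Then there exist bin edges x_1 < x_2 < … < x_{M+1} (real numbers) such that the family of truncated homodyne POVM matrices {Π(I_i, θ_k) : 1 ≤ i ≤ M, 0 ≤ k ≤ N−1}, with bins I_i = [x_i, x_{i+1}) and phases θ_k = 2πk/N, spans the full matrix space M_{n_max+1}(ℂ) as a complex vector space (i.e., the POVM is informationally complete for cutoff n_max). -/

import Mathlib

/-- The `n`-th physicists' Hermite polynomial (as a function),
`H_n(x) = (−1)^n e^{x²} (d/dx)^n e^{−x²}`. -/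
noncomputable def physHermite (n : ℕ) (x : ℝ) : ℝ :=
  (-1 : ℝ) ^ n * Real.exp (x ^ 2) * iteratedDeriv n (fun y => Real.exp (-y ^ 2)) x

/-- The normalized Hermite overlap integral
`(2^{m+n} m! n! π)^{−1/2} ∫_u^v H_m(x) H_n(x) e^{−x²} dx`. -/
noncomputable def hermOverlap (m n : ℕ) (u v : ℝ) : ℝ :=
  (Real.sqrt (2 ^ (m + n) * m.factorial * n.factorial * Real.pi))⁻¹ *
    ∫ x in u..v, physHermite m x * physHermite n x * Real.exp (-x ^ 2)

/-- The truncated homodyne POVM matrix `Π([u,v), θ)` for photon-number cutoff `nmax`: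
`Π(I,θ)_{m,n} = e^{i(m−n)θ} (2^{m+n} m! n! π)^{−1/2} ∫_u^v H_m H_n e^{−x²}`. -/
noncomputable def homPOVM (nmax : ℕ) (u v θ : ℝ) :
    Matrix (Fin (nmax + 1)) (Fin (nmax + 1)) ℂ :=
  Matrix.of fun m n =>
    Complex.exp (Complex.I * (((m : ℕ) : ℂ) - ((n : ℕ) : ℂ)) * (θ : ℂ)) *
      (hermOverlap m n u v : ℂ)



open Polynomial in
noncomputable def Hpoly : ℕ → Polynomial ℝ
  | 0 => 1
  | (n+1) => C 2 * X * Hpoly n - derivative (Hpoly n)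

open Polynomial Matrix

lemma Hpoly_deg_coeff (n : ℕ) : (Hpoly n).natDegree = n ∧ (Hpoly n).coeff n = 2 ^ n := by
  induction n with
  | zero => simp [Hpoly]
  | succ n ih =>
    obtain ⟨hd, hc⟩ := ih
    have hcoeff : (Hpoly (n+1)).coeff (n+1) = 2 ^ (n+1) := by
      have h1 : (C 2 * X * Hpoly n).coeff (n+1) = 2 * (Hpoly n).coeff n := by
        rw [mul_assoc, coeff_C_mul, coeff_X_mul]
      have h2 : (derivative (Hpoly n)).coeff (n+1) = 0 := by
        rw [coeff_derivative]
        have : (Hpoly n).coeff (n+2) = 0 := coeff_eq_zero_of_natDegree_lt (by omega)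
        simp [this]
      rw [Hpoly, coeff_sub, h1, h2, hc]; ring
    have hdegle : (Hpoly (n+1)).natDegree ≤ n+1 := by
      rw [Hpoly]
      refine le_trans (natDegree_sub_le _ _) (max_le ?_ ?_)
      · refine le_trans (natDegree_mul_le) ?_
        have : (C (2:ℝ) * X).natDegree ≤ 1 := le_trans natDegree_mul_le (by simp)
        omega
      · have := natDegree_derivative_le (Hpoly n)
        omega
    constructor
    · refine le_antisymm hdegle (le_natDegree_of_ne_zero ?_)
      rw [hcoeff]; positivity
    · exact hcoeff

lemma Hpoly_natDegree (n : ℕ) : (Hpoly n).natDegree = n := (Hpoly_deg_coeff n).1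

lemma Hpoly_ne_zero (n : ℕ) : Hpoly n ≠ 0 := by
  intro h
  have := (Hpoly_deg_coeff n).2
  rw [h] at this
  simp at this
  nlinarith [pow_pos (by norm_num : (0:ℝ) < 2) n]

lemma hasDerivAt_gauss (x : ℝ) :
    HasDerivAt (fun y : ℝ => Real.exp (-y^2)) (-(2*x) * Real.exp (-x^2)) x := by
  have h1 : HasDerivAt (fun y : ℝ => -y^2) (-(2*x)) x := by
    simpa using (hasDerivAt_pow 2 x).fun_neg
  simpa [mul_comm] using h1.exp

lemma iteratedDeriv_gauss (n : ℕ) :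
    iteratedDeriv n (fun y : ℝ => Real.exp (-y^2))
      = fun x => (-1)^n * (Hpoly n).eval x * Real.exp (-x^2) := by
  induction n with
  | zero => funext x; simp [Hpoly]
  | succ n ih =>
    rw [iteratedDeriv_succ, ih]
    funext x
    have h : HasDerivAt (fun x : ℝ => (-1)^n * (Hpoly n).eval x * Real.exp (-x^2))
        ((-1)^(n+1) * (Hpoly (n+1)).eval x * Real.exp (-x^2)) x := by
      have h1 : HasDerivAt (fun x : ℝ => (-1:ℝ)^n * (Hpoly n).eval x)
          ((-1)^n * (Hpoly n).derivative.eval x) x := ((Hpoly n).hasDerivAt x).const_mul _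
      have := h1.fun_mul (hasDerivAt_gauss x)
      refine this.congr_deriv ?_
      simp [Hpoly]
      ring
    exact h.deriv

lemma physHermite_eq (n : ℕ) (x : ℝ) : physHermite n x = (Hpoly n).eval x := by
  rw [physHermite, iteratedDeriv_gauss]
  have h1 : Real.exp (x^2) * Real.exp (-x^2) = 1 := by
    rw [← Real.exp_add]; simp
  have h2 : ((-1:ℝ)^n) * (-1:ℝ)^n = 1 := by
    rw [← pow_add]; simp [pow_mul]
  calc (-1:ℝ)^n * Real.exp (x^2) * ((fun x => (-1:ℝ)^n * (Hpoly n).eval x * Real.exp (-x^2)) x)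
      = ((-1:ℝ)^n * (-1)^n) * (Real.exp (x^2) * Real.exp (-x^2)) * (Hpoly n).eval x := by
        simp only; ring
    _ = (Hpoly n).eval x := by rw [h1, h2]; ring

lemma Hpoly_comp_neg (n : ℕ) : (Hpoly n).comp (-X) = C ((-1:ℝ)^n) * Hpoly n := by
  induction n with
  | zero => simp [Hpoly]
  | succ n ih =>
    have hder : (derivative (Hpoly n)).comp (-X) = C ((-1:ℝ)^(n+1)) * derivative (Hpoly n) := by
      have h1 := derivative_comp (Hpoly n) (-X)
      rw [ih, derivative_C_mul] at h1
      have h2 : derivative (-X : ℝ[X]) = C (-1) := by simp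
      rw [h2] at h1
      have h3 : (derivative (Hpoly n)).comp (-X)
          = C (-1) * (C ((-1:ℝ)^n) * derivative (Hpoly n)) := by
        have := congrArg (fun p => C (-1:ℝ) * p) h1.symm
        simpa [mul_assoc] using this
      rw [h3, ← mul_assoc, ← C_mul, ← pow_succ']
    have hrec : Hpoly (n+1) = C 2 * X * Hpoly n - derivative (Hpoly n) := rfl
    rw [hrec, sub_comp, mul_comp, mul_comp, C_comp, X_comp, hder, ih]
    simp only [pow_succ, C_mul, map_neg, C_1]
    ring


lemma exists_root_of_integral_zero {g : ℝ → ℝ} (hg : Continuous g) {u v : ℝ} (huv : u < v)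
    (h : ∫ t in u..v, g t = 0) : ∃ c ∈ Set.Ioo u v, g c = 0 := by
  have hF : ∀ t : ℝ, HasDerivAt (fun w => ∫ s in u..w, g s) (g t) t := fun t =>
    intervalIntegral.integral_hasDerivAt_right (hg.intervalIntegrable _ _)
      (hg.stronglyMeasurableAtFilter _ _) hg.continuousAt
  refine exists_hasDerivAt_eq_zero huv ?_ ?_ (fun t _ => hF t)
  · exact fun t _ => (hF t).continuousAt.continuousWithinAt
  · simp [h, intervalIntegral.integral_same]

lemma tri {ι : Type*} [DecidableEq ι] (P : ι → Polynomial ℝ) (F : Finset ι) :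
    ∀ b : ι → ℝ, (∀ p ∈ F, P p ≠ 0) →
      (∀ p ∈ F, ∀ q ∈ F, (P p).natDegree = (P q).natDegree → p = q) →
      ∑ p ∈ F, Polynomial.C (b p) * P p = 0 → ∀ p ∈ F, b p = 0 := by
  induction F using Finset.strongInduction with
  | _ F ih =>
    intro b h0 hinj hsum p hp
    have hne : F.Nonempty := ⟨p, hp⟩
    obtain ⟨p₀, hp₀, hmax⟩ := F.exists_max_image (fun q => (P q).natDegree) hne
    have hb0 : b p₀ = 0 := by
      have hco := congrArg (fun q => Polynomial.coeff q ((P p₀).natDegree)) hsum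
      simp only [finset_sum_coeff, coeff_C_mul, coeff_zero] at hco
      rw [Finset.sum_eq_single_of_mem p₀ hp₀] at hco
      · have hl : (P p₀).coeff (P p₀).natDegree ≠ 0 := by
          rw [← leadingCoeff]; exact leadingCoeff_ne_zero.mpr (h0 p₀ hp₀)
        exact (mul_eq_zero.mp hco).resolve_right hl
      · intro q hq hqne
        have hlt : (P q).natDegree < (P p₀).natDegree :=
          lt_of_le_of_ne (hmax q hq) (fun hEq => hqne (hinj q hq p₀ hp₀ hEq))
        rw [coeff_eq_zero_of_natDegree_lt hlt, mul_zero]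
    rcases eq_or_ne p p₀ with rfl | hne2
    · exact hb0
    have hsum' : ∑ q ∈ F.erase p₀, Polynomial.C (b q) * P q = 0 := by
      rw [← Finset.add_sum_erase _ _ hp₀] at hsum
      simpa [hb0] using hsum
    exact ih (F.erase p₀) (Finset.erase_ssubset hp₀) b
      (fun q hq => h0 q (Finset.mem_of_mem_erase hq))
      (fun q hq r hr => hinj q (Finset.mem_of_mem_erase hq) r (Finset.mem_of_mem_erase hr))
      hsum' p (Finset.mem_erase.mpr ⟨hne2, hp⟩)

lemma neg_one_pow_congr_mod {k l : ℕ} (h : k % 2 = l % 2) : (-1:ℝ)^k = (-1)^l := by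
  rw [← Nat.div_add_mod k 2, ← Nat.div_add_mod l 2, pow_add, pow_add, pow_mul, pow_mul]
  norm_num [h]

lemma bins {nmax M : ℕ} (hM : nmax + 1 ≤ M) (s : ℤ)
    (b : Fin (nmax+1) × Fin (nmax+1) → ℝ)
    (hint : ∀ i : Fin M, (∫ t in (((i:ℕ):ℝ)+1)..(((i:ℕ):ℝ)+2),
        (∑ p ∈ Finset.univ.filter (fun p : Fin (nmax+1) × Fin (nmax+1) => (p.1:ℤ) - (p.2:ℤ) = s),
          Polynomial.C (b p) * (Hpoly p.1 * Hpoly p.2)).eval t * Real.exp (-t^2)) = 0) :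
    ∀ p ∈ Finset.univ.filter
        (fun p : Fin (nmax+1) × Fin (nmax+1) => (p.1:ℤ) - (p.2:ℤ) = s), b p = 0 := by
  set F := Finset.univ.filter
      (fun p : Fin (nmax+1) × Fin (nmax+1) => (p.1:ℤ) - (p.2:ℤ) = s) with hF
  set q := ∑ p ∈ F, Polynomial.C (b p) * (Hpoly p.1 * Hpoly p.2) with hq
  have hP0 : ∀ p : Fin (nmax+1) × Fin (nmax+1), Hpoly p.1 * Hpoly p.2 ≠ 0 :=
    fun p => mul_ne_zero (Hpoly_ne_zero _) (Hpoly_ne_zero _)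
  have hPdeg : ∀ p : Fin (nmax+1) × Fin (nmax+1),
      (Hpoly p.1 * Hpoly p.2).natDegree = (p.1:ℕ) + (p.2:ℕ) := by
    intro p
    rw [natDegree_mul (Hpoly_ne_zero _) (Hpoly_ne_zero _), Hpoly_natDegree, Hpoly_natDegree]
  have hinj : ∀ p ∈ F, ∀ r ∈ F,
      (Hpoly p.1 * Hpoly p.2).natDegree = (Hpoly r.1 * Hpoly r.2).natDegree → p = r := by
    intro p hp r hr h
    rw [hPdeg, hPdeg] at h
    rw [hF, Finset.mem_filter] at hp hr
    have h1 : (p.1:ℕ) = (r.1:ℕ) ∧ (p.2:ℕ) = (r.2:ℕ) := by omega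
    exact Prod.ext (Fin.ext h1.1) (Fin.ext h1.2)
  rcases eq_or_ne q 0 with hq0 | hq0
  · exact tri _ F b (fun p _ => hP0 p) hinj hq0
  exfalso
  have hcont : Continuous fun t : ℝ => q.eval t * Real.exp (-t^2) :=
    q.continuous_aeval.mul (Real.continuous_exp.comp (continuous_pow 2).neg)
  have hc : ∀ i : Fin M, ∃ c ∈ Set.Ioo (((i:ℕ):ℝ)+1) (((i:ℕ):ℝ)+2), q.eval c = 0 := by
    intro i
    obtain ⟨c, hc1, hc2⟩ := exists_root_of_integral_zero hcont (by linarith) (hint i)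
    exact ⟨c, hc1, (mul_eq_zero.mp hc2).resolve_right (Real.exp_ne_zero _)⟩
  choose c hcIoo hcroot using hc
  -- parity of q
  have hpar : q.comp (-X) = C ((-1:ℝ)^s.natAbs) * q := by
    have hcs : q.comp (-X) = ∑ p ∈ F, (Polynomial.C (b p) * (Hpoly p.1 * Hpoly p.2)).comp (-X) := by
      rw [hq]
      exact map_sum (compRingHom (-X)) _ F
    rw [hcs, hq, Finset.mul_sum]
    refine Finset.sum_congr rfl ?_
    intro p hp
    rw [mul_comp, mul_comp, C_comp, Hpoly_comp_neg, Hpoly_comp_neg]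
    have hmod : ((p.1:ℕ) + (p.2:ℕ)) % 2 = s.natAbs % 2 := by
      rw [hF, Finset.mem_filter] at hp
      omega
    have : C ((-1:ℝ)^(p.1:ℕ)) * C ((-1:ℝ)^(p.2:ℕ)) = C ((-1:ℝ)^s.natAbs) := by
      rw [← C_mul, ← pow_add, neg_one_pow_congr_mod hmod]
    calc Polynomial.C (b p) * (C ((-1:ℝ)^(p.1:ℕ)) * Hpoly p.1 * (C ((-1:ℝ)^(p.2:ℕ)) * Hpoly p.2))
        = (C ((-1:ℝ)^(p.1:ℕ)) * C ((-1:ℝ)^(p.2:ℕ))) * (Polynomial.C (b p) * (Hpoly p.1 * Hpoly p.2)) := by ring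
      _ = C ((-1:ℝ)^s.natAbs) * (Polynomial.C (b p) * (Hpoly p.1 * Hpoly p.2)) := by rw [this]
  have hnegroot : ∀ i : Fin M, q.eval (-(c i)) = 0 := by
    intro i
    have : q.eval (-(c i)) = (q.comp (-X)).eval (c i) := by
      rw [eval_comp]; simp
    rw [this, hpar]
    simp [hcroot i]
  -- positivity and strict monotonicity of roots
  have hcpos : ∀ i : Fin M, 0 < c i := by
    intro i
    have := (hcIoo i).1
    have : ((i:ℕ):ℝ) ≥ 0 := Nat.cast_nonneg _
    nlinarith [(hcIoo i).1, this]
  have hcmono : StrictMono c := by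
    intro i j hij
    have h1 : ((i:ℕ):ℝ) + 2 ≤ ((j:ℕ):ℝ) + 1 := by
      have h0 : (i:ℕ) + 1 ≤ (j:ℕ) := hij
      have h0' : ((i:ℕ):ℝ) + 1 ≤ ((j:ℕ):ℝ) := by exact_mod_cast h0
      linarith
    linarith [(hcIoo i).2, (hcIoo j).1]
  -- collect roots
  set S : Finset ℝ := (Finset.univ.image c) ∪ (Finset.univ.image (fun i => -(c i))) with hS
  have hcard : S.card = 2 * M := by
    rw [hS, Finset.card_union_of_disjoint, Finset.card_image_of_injective _ hcmono.injective,
      Finset.card_image_of_injective _ (by intro i j h; exact hcmono.injective (neg_injective h))]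
    · simp; ring
    · rw [Finset.disjoint_left]
      intro a ha ha'
      simp only [Finset.mem_image, Finset.mem_univ, true_and] at ha ha'
      obtain ⟨i, rfl⟩ := ha
      obtain ⟨j, hj⟩ := ha'
      have := hcpos i
      have := hcpos j
      linarith [hj]
  have hsub : S ⊆ q.roots.toFinset := by
    intro a ha
    rw [Multiset.mem_toFinset, mem_roots hq0]
    rw [hS, Finset.mem_union] at ha
    rcases ha with ha | ha <;> simp only [Finset.mem_image, Finset.mem_univ, true_and] at ha
    · obtain ⟨i, rfl⟩ := ha; exact hcroot i
    · obtain ⟨i, rfl⟩ := ha; exact hnegroot i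
  have hdeg : q.natDegree ≤ 2 * nmax := by
    rw [hq]
    refine natDegree_sum_le_of_forall_le _ _ ?_
    intro p _
    refine le_trans (natDegree_C_mul_le _ _) ?_
    rw [hPdeg]
    have := p.1.isLt
    have := p.2.isLt
    omega
  have h1 : S.card ≤ q.roots.toFinset.card := Finset.card_le_card hsub
  have h2 : q.roots.toFinset.card ≤ Multiset.card q.roots := q.roots.toFinset_card_le
  have h3 : Multiset.card q.roots ≤ q.natDegree := q.card_roots'
  omega


lemma nu_inj {N : ℕ} (hN : 0 < N) :
    Function.Injective (fun r : Fin N => Complex.exp (2*(Real.pi:ℂ)*Complex.I*((r:ℕ):ℂ)/N)) := by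
  intro r r' h
  simp only [Complex.exp_eq_exp_iff_exists_int] at h
  obtain ⟨n, hn⟩ := h
  have hNne : ((N:ℂ)) ≠ 0 := Nat.cast_ne_zero.mpr hN.ne'
  have hpi : (Real.pi : ℂ) ≠ 0 := Complex.ofReal_ne_zero.mpr Real.pi_ne_zero
  have h2 : (2*(Real.pi:ℂ)*Complex.I) ≠ 0 := by
    simp [hpi, Complex.I_ne_zero]
  have hkey : ((r:ℕ):ℂ) = ((r':ℕ):ℂ) + n * N := by
    field_simp at hn
    apply mul_left_cancel₀ h2
    linear_combination (2*(Real.pi:ℂ)*Complex.I) * hn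
  have hz : ((r:ℕ):ℤ) = ((r':ℕ):ℤ) + n * N := by exact_mod_cast hkey
  have hr := r.isLt
  have hr' := r'.isLt
  have hn0 : n = 0 := by
    rcases lt_trichotomy n 0 with hlt | h0 | hgt
    · have h1 : n ≤ -1 := by omega
      have : n * (N:ℤ) ≤ -1 * N := by
        apply mul_le_mul_of_nonneg_right h1 (by positivity)
      omega
    · exact h0
    · have h1 : (1:ℤ) ≤ n := by omega
      have : 1 * (N:ℤ) ≤ n * N := by
        apply mul_le_mul_of_nonneg_right h1 (by positivity)
      omega
  subst hn0
  simp at hz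
  exact Fin.ext (by exact_mod_cast hz)

lemma vand {N : ℕ} (b : Fin N → ℂ) (ν : Fin N → ℂ) (hinj : Function.Injective ν)
    (h : ∀ k : Fin N, ∑ r, ν r ^ (k : ℕ) * b r = 0) : ∀ r, b r = 0 := by
  have hdet : ((Matrix.vandermonde ν)ᵀ).det ≠ 0 := by
    rw [Matrix.det_transpose, Matrix.det_vandermonde_ne_zero_iff]
    exact fun i j hij => hinj hij
  have hmul : (Matrix.vandermonde ν)ᵀ.mulVec b = 0 := by
    funext k
    simpa [Matrix.mulVec, Matrix.vandermonde, dotProduct,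
      Matrix.transpose_apply] using h k
  have := Matrix.eq_zero_of_mulVec_eq_zero hdet hmul
  exact fun r => congrFun this r

lemma sqrt_fac_pos (m n : ℕ) :
    0 < Real.sqrt (2 ^ (m + n) * m.factorial * n.factorial * Real.pi) := by
  apply Real.sqrt_pos.mpr
  have h1 : (0:ℝ) < 2 ^ (m+n) := by positivity
  have h2 : (0:ℝ) < m.factorial := by exact_mod_cast m.factorial_pos
  have h3 : (0:ℝ) < n.factorial := by exact_mod_cast n.factorial_pos
  exact mul_pos (mul_pos (mul_pos h1 h2) h3) Real.pi_pos

lemma hermOverlap_eq (m n : ℕ) (u v : ℝ) :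
    hermOverlap m n u v = (Real.sqrt (2 ^ (m + n) * m.factorial * n.factorial * Real.pi))⁻¹ *
      ∫ t in u..v, (Hpoly m * Hpoly n).eval t * Real.exp (-t ^ 2) := by
  rw [hermOverlap]
  congr 1
  refine intervalIntegral.integral_congr fun t _ => ?_
  simp [physHermite_eq, eval_mul]

noncomputable def rho (N : ℕ) {d : ℕ} (hN : 0 < N) (p : Fin d × Fin d) : Fin N :=
  ⟨(((p.1 : ℤ) - (p.2 : ℤ)) % N).toNat, by
    have h1 : ((p.1:ℤ) - (p.2:ℤ)) % N < N := Int.emod_lt_of_pos _ (by exact_mod_cast hN)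
    have h2 : 0 ≤ ((p.1:ℤ) - (p.2:ℤ)) % N := Int.emod_nonneg _ (by exact_mod_cast hN.ne')
    omega⟩

lemma hkey {d N : ℕ} (hN : 0 < N) (p : Fin d × Fin d) (k : Fin N) :
    Complex.exp (Complex.I * (((p.1 : ℕ) : ℂ) - ((p.2 : ℕ) : ℂ)) *
        ((2 * Real.pi * (k : ℕ) / N : ℝ) : ℂ))
      = Complex.exp (2 * (Real.pi : ℂ) * Complex.I * (((rho N hN p : Fin N) : ℕ) : ℂ) / N)
          ^ (k : ℕ) := by
  set z : ℤ := (p.1 : ℤ) - (p.2 : ℤ) with hz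
  rw [← Complex.exp_nat_mul, Complex.exp_eq_exp_iff_exists_int]
  refine ⟨(k : ℤ) * (z / N), ?_⟩
  have hNne : ((N:ℂ)) ≠ 0 := Nat.cast_ne_zero.mpr hN.ne'
  have hρ : (((rho N hN p : Fin N) : ℕ) : ℂ) = ((z % N : ℤ) : ℂ) := by
    have h0 : (((rho N hN p : Fin N) : ℕ) : ℤ) = z % N := by
      simp [rho, hz, Int.toNat_of_nonneg (Int.emod_nonneg _ (by exact_mod_cast hN.ne' : (N:ℤ) ≠ 0))]
    exact_mod_cast h0
  have hdiv : ((N:ℂ)) * ((z / N : ℤ) : ℂ) + ((z % N : ℤ) : ℂ) = ((z : ℤ) : ℂ) := by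
    exact_mod_cast Int.mul_ediv_add_emod z (N:ℤ)
  have hZc : ((p.1 : ℕ) : ℂ) - ((p.2 : ℕ) : ℂ) = ((z : ℤ) : ℂ) := by push_cast [hz]; ring
  rw [hρ, hZc]
  push_cast
  field_simp
  linear_combination (-((k:ℕ):ℂ)) * hdiv

lemma integral_eval_sum {ι : Type*} (F : Finset ι) (b : ι → ℝ) (P : ι → Polynomial ℝ)
    (a c : ℝ) :
    (∫ t in a..c, (∑ p ∈ F, Polynomial.C (b p) * P p).eval t * Real.exp (-t^2))
      = ∑ p ∈ F, b p * ∫ t in a..c, (P p).eval t * Real.exp (-t^2) := by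
  have h1 : ∀ t : ℝ, (∑ p ∈ F, Polynomial.C (b p) * P p).eval t * Real.exp (-t^2)
      = ∑ p ∈ F, b p * ((P p).eval t * Real.exp (-t^2)) := by
    intro t
    rw [eval_finset_sum, Finset.sum_mul]
    refine Finset.sum_congr rfl fun p _ => ?_
    rw [eval_mul, eval_C]
    ring
  rw [intervalIntegral.integral_congr
    (g := fun t => ∑ p ∈ F, b p * ((P p).eval t * Real.exp (-t^2))) (fun t _ => h1 t)]
  rw [intervalIntegral.integral_finset_sum
    (f := fun p (t : ℝ) => b p * ((P p).eval t * Real.exp (-t^2))) (fun p _ =>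
    ((continuous_const.mul ((P p).continuous.mul
      ((continuous_pow 2).neg.rexp))).intervalIntegrable _ _))]
  exact Finset.sum_congr rfl fun p _ => intervalIntegral.integral_const_mul _ _

set_option maxHeartbeats 1000000 in
theorem homPOVM_informationally_complete (nmax N M : ℕ)
    (hN : N ≥ 2 * nmax + 1) (hM : M ≥ nmax + 1) :
    ∃ x : Fin (M + 1) → ℝ, StrictMono x ∧
      Submodule.span ℂ
        (Set.range fun p : Fin M × Fin N =>
          homPOVM nmax (x p.1.castSucc) (x p.1.succ)
            (2 * Real.pi * (p.2 : ℕ) / N)) = ⊤ := by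
  have hNpos : 0 < N := by omega
  refine ⟨fun i => ((i : ℕ) : ℝ) + 1, ?_, ?_⟩
  · intro i j hij
    have h1 : (i:ℕ) < (j:ℕ) := hij
    have h2 : ((i:ℕ):ℝ) < ((j:ℕ):ℝ) := by exact_mod_cast h1
    simp only
    linarith
  by_contra hne
  obtain ⟨φ, hφne, hφbot⟩ :=
    Submodule.exists_dual_map_eq_bot_of_lt_top (lt_top_iff_ne_top.mpr hne) inferInstance
  apply hφne
  set A : Fin (nmax+1) → Fin (nmax+1) → ℂ :=
    fun m n => φ (Matrix.single m n 1) with hA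
  have hrep : ∀ X : Matrix (Fin (nmax+1)) (Fin (nmax+1)) ℂ,
      φ X = ∑ m, ∑ n, X m n * A m n := by
    intro X
    conv_lhs => rw [Matrix.matrix_eq_sum_single X]
    rw [map_sum]
    refine Finset.sum_congr rfl fun m _ => ?_
    rw [map_sum]
    refine Finset.sum_congr rfl fun n _ => ?_
    have hsm : Matrix.single m n (X m n) = (X m n) • Matrix.single m n 1 := by
      rw [Matrix.smul_single, smul_eq_mul, mul_one]
    rw [hsm, LinearMap.map_smul, smul_eq_mul]
  have hrep' : ∀ X : Matrix (Fin (nmax+1)) (Fin (nmax+1)) ℂ,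
      φ X = ∑ p : Fin (nmax+1) × Fin (nmax+1), X p.1 p.2 * A p.1 p.2 := by
    intro X
    rw [hrep X]
    exact (Fintype.sum_prod_type (fun p : Fin (nmax+1) × Fin (nmax+1) =>
      X p.1 p.2 * A p.1 p.2)).symm
  -- vanishing of φ on the POVM matrices
  have hvan : ∀ (i : Fin M) (k : Fin N),
      φ (homPOVM nmax (((i:ℕ):ℝ)+1) (((i:ℕ):ℝ)+2) (2*Real.pi*(k:ℕ)/N)) = 0 := by
    intro i k
    have hmem := Submodule.subset_span (R := ℂ) (Set.mem_range_self (f := fun p : Fin M × Fin N =>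
      homPOVM nmax ((fun i : Fin (M+1) => ((i : ℕ) : ℝ) + 1) p.1.castSucc)
        ((fun i : Fin (M+1) => ((i : ℕ) : ℝ) + 1) p.1.succ)
        (2 * Real.pi * (p.2 : ℕ) / N)) (i, k))
    have h0 := Submodule.mem_map_of_mem (f := φ) hmem
    rw [hφbot] at h0
    simp only [Submodule.mem_bot] at h0
    have e1 : (((i, k).1.castSucc : Fin (M+1)) : ℕ) = (i : ℕ) := rfl
    have e2 : (((i, k).1.succ : Fin (M+1)) : ℕ) = (i : ℕ) + 1 := rfl
    simp only [e1, e2] at h0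
    push_cast at h0
    rw [show ((i:ℕ):ℝ) + 1 + 1 = ((i:ℕ):ℝ) + 2 from by ring] at h0
    exact h0
  -- the ν and g data
  set ν : Fin N → ℂ := fun r => Complex.exp (2*(Real.pi:ℂ)*Complex.I*((r:ℕ):ℂ)/N) with hνdef
  set g : Fin M → Fin (nmax+1) × Fin (nmax+1) → ℂ :=
    fun i p => (hermOverlap p.1 p.2 (((i:ℕ):ℝ)+1) (((i:ℕ):ℝ)+2) : ℂ) * A p.1 p.2 with hg
  have hexp : ∀ (i : Fin M) (k : Fin N), ∑ p : Fin (nmax+1) × Fin (nmax+1),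
      ν (rho N hNpos p) ^ (k : ℕ) * g i p = 0 := by
    intro i k
    have h0 := hvan i k
    rw [hrep'] at h0
    rw [← h0]
    refine Finset.sum_congr rfl fun p _ => ?_
    have hentry : homPOVM nmax (((i:ℕ):ℝ)+1) (((i:ℕ):ℝ)+2) (2*Real.pi*(k:ℕ)/N) p.1 p.2
        = Complex.exp (Complex.I * (((p.1 : ℕ) : ℂ) - ((p.2 : ℕ) : ℂ)) *
            ((2 * Real.pi * (k:ℕ) / N : ℝ) : ℂ)) *
          (hermOverlap p.1 p.2 (((i:ℕ):ℝ)+1) (((i:ℕ):ℝ)+2) : ℂ) := rfl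
    rw [hentry, hkey hNpos p k]
    rw [hg]
    ring
  -- fiberwise sums vanish
  have hfib : ∀ (i : Fin M) (t : Fin N),
      ∑ p ∈ Finset.univ.filter (fun p => rho N hNpos p = t), g i p = 0 := by
    intro i t
    refine vand (fun t => ∑ p ∈ Finset.univ.filter (fun p => rho N hNpos p = t), g i p)
      ν (nu_inj hNpos) ?_ t
    intro k
    calc ∑ t, ν t ^ (k:ℕ) * ∑ p ∈ Finset.univ.filter (fun p => rho N hNpos p = t), g i p
        = ∑ t, ∑ p ∈ Finset.univ.filter (fun p => rho N hNpos p = t),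
            ν (rho N hNpos p) ^ (k:ℕ) * g i p := by
          refine Finset.sum_congr rfl fun t _ => ?_
          rw [Finset.mul_sum]
          refine Finset.sum_congr rfl fun p hp => ?_
          rw [(Finset.mem_filter.mp hp).2]
      _ = ∑ p, ν (rho N hNpos p) ^ (k:ℕ) * g i p :=
          Finset.sum_fiberwise_of_maps_to (fun p _ => Finset.mem_univ _) _
      _ = 0 := hexp i k
  -- entries of A vanish
  have hA0 : ∀ p₀ : Fin (nmax+1) × Fin (nmax+1), A p₀.1 p₀.2 = 0 := by
    intro p₀
    have hfilter : Finset.univ.filter (fun p : Fin (nmax+1) × Fin (nmax+1) =>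
          rho N hNpos p = rho N hNpos p₀)
        = Finset.univ.filter (fun p => (p.1:ℤ) - (p.2:ℤ) = (p₀.1:ℤ) - (p₀.2:ℤ)) := by
      refine Finset.filter_congr fun p _ => ?_
      constructor
      · intro h
        have hval : ((((p.1:ℤ) - (p.2:ℤ)) % N).toNat) = ((((p₀.1:ℤ) - (p₀.2:ℤ)) % N).toNat) :=
          congrArg Fin.val h
        have n1 : 0 ≤ ((p.1:ℤ) - (p.2:ℤ)) % N :=
          Int.emod_nonneg _ (by exact_mod_cast hNpos.ne')
        have n2 : 0 ≤ ((p₀.1:ℤ) - (p₀.2:ℤ)) % N :=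
          Int.emod_nonneg _ (by exact_mod_cast hNpos.ne')
        have e1 : ((p.1:ℤ) - (p.2:ℤ)) % N = ((p₀.1:ℤ) - (p₀.2:ℤ)) % N := by omega
        have hdvd : (N:ℤ) ∣ ((p₀.1:ℤ) - (p₀.2:ℤ)) - ((p.1:ℤ) - (p.2:ℤ)) :=
          Int.ModEq.dvd (e1 : Int.ModEq (N:ℤ) _ _)
        obtain ⟨cq, hcq⟩ := hdvd
        have b1 := p.1.isLt
        have b2 := p.2.isLt
        have b3 := p₀.1.isLt
        have b4 := p₀.2.isLt
        have hc0 : cq = 0 := by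
          rcases lt_trichotomy cq 0 with h' | h' | h'
          · have h1' : cq ≤ -1 := by omega
            have : (N:ℤ) * cq ≤ N * (-1) :=
              mul_le_mul_of_nonneg_left h1' (by positivity)
            omega
          · exact h'
          · have h1' : (1:ℤ) ≤ cq := by omega
            have : (N:ℤ) * 1 ≤ N * cq :=
              mul_le_mul_of_nonneg_left h1' (by positivity)
            omega
        rw [hc0, mul_zero] at hcq
        omega
      · intro h
        apply Fin.ext
        show ((((p.1:ℤ) - (p.2:ℤ)) % N).toNat) = ((((p₀.1:ℤ) - (p₀.2:ℤ)) % N).toNat)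
        rw [h]
    have hdiag : ∀ i : Fin M,
        ∑ p ∈ Finset.univ.filter (fun p : Fin (nmax+1) × Fin (nmax+1) =>
          (p.1:ℤ) - (p.2:ℤ) = (p₀.1:ℤ) - (p₀.2:ℤ)), g i p = 0 := by
      intro i
      have h0 := hfib i (rho N hNpos p₀)
      rwa [hfilter] at h0
    -- real and imaginary parts via the bins lemma
    have hmain : ∀ w : ℂ → ℝ, (∀ z₁ z₂ : ℂ, w (z₁ + z₂) = w z₁ + w z₂) →
        (∀ (r : ℝ) (z : ℂ), w ((r:ℂ) * z) = r * w z) →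
        w (A p₀.1 p₀.2) = 0 := by
      intro w hadd hmul
      set w' : ℂ →+ ℝ := AddMonoidHom.mk' w hadd with hw'
      have hwsum : ∀ i : Fin M,
          ∑ p ∈ Finset.univ.filter (fun p : Fin (nmax+1) × Fin (nmax+1) =>
            (p.1:ℤ) - (p.2:ℤ) = (p₀.1:ℤ) - (p₀.2:ℤ)),
            hermOverlap p.1 p.2 (((i:ℕ):ℝ)+1) (((i:ℕ):ℝ)+2) * w (A p.1 p.2) = 0 := by
        intro i
        have h0 := congrArg w' (hdiag i)
        rw [map_sum, map_zero] at h0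
        rw [← h0]
        refine Finset.sum_congr rfl fun p _ => ?_
        show hermOverlap p.1 p.2 _ _ * w (A p.1 p.2) = w (g i p)
        rw [hg]
        exact (hmul _ _).symm
      have hbins := bins hM ((p₀.1:ℤ) - (p₀.2:ℤ))
        (fun p => (Real.sqrt (2 ^ ((p.1:ℕ) + (p.2:ℕ)) * (p.1:ℕ).factorial * (p.2:ℕ).factorial
          * Real.pi))⁻¹ * w (A p.1 p.2)) ?_
      · have hp₀mem : p₀ ∈ Finset.univ.filter (fun p : Fin (nmax+1) × Fin (nmax+1) =>
            (p.1:ℤ) - (p.2:ℤ) = (p₀.1:ℤ) - (p₀.2:ℤ)) :=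
          Finset.mem_filter.mpr ⟨Finset.mem_univ _, rfl⟩
        have h0 := hbins p₀ hp₀mem
        have hγ := sqrt_fac_pos (p₀.1:ℕ) (p₀.2:ℕ)
        rcases mul_eq_zero.mp h0 with h | h
        · exact absurd h (inv_ne_zero hγ.ne')
        · exact h
      · intro i
        rw [integral_eval_sum]
        rw [← hwsum i]
        refine Finset.sum_congr rfl fun p _ => ?_
        rw [hermOverlap_eq]
        ring
    have hre := hmain Complex.re (fun _ _ => Complex.add_re _ _) Complex.re_ofReal_mul
    have him := hmain Complex.im (fun _ _ => Complex.add_im _ _) Complex.im_ofReal_mul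
    exact Complex.ext hre him
  refine LinearMap.ext fun X => ?_
  rw [hrep' X]
  simp only [LinearMap.zero_apply]
  refine Finset.sum_eq_zero fun p _ => ?_
  rw [hA0 p, mul_zero]
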